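/- Let T^1 = KR_right(S,A)^1 for a finite semigroup S generated by a finite alphabet A, and let D be the Lyndon–Chiswell length function on T^1. For all α, β, γ ∈ T^1, D(αγ, βγ) ≥ D(α, β). -/

import Mathlib

open scoped Classical

namespace KRHolonomy

/-- Green's quasi-order `≤_J` on a monoid: `a ≤_J b` iff `a ∈ M b M`. -/
def leJ {M : Type*} [Monoid M] (a b : M) : Prop := ∃ x y : M, a = x * b * y

/-- `a <_J b` iff `a ≤_J b` and not `b ≤_J a`. -/
def ltJ {M : Type*} [Monoid M] (a b : M) : Prop := leJ a b ∧ ¬ leJ b a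

/-- Green's quasi-order `≤_R` on a monoid: `a ≤_R b` iff `a ∈ b M`. -/
def leR {M : Type*} [Monoid M] (a b : M) : Prop := ∃ x : M, a = b * x

/-- `a <_R b` iff `a ≤_R b` and not `b ≤_R a`. -/
def ltR {M : Type*} [Monoid M] (a b : M) : Prop := leR a b ∧ ¬ leR b a

/-- Green's quasi-order `≤_L` on a monoid: `a ≤_L b` iff `a ∈ M b`. -/
def leL {M : Type*} [Monoid M] (a b : M) : Prop := ∃ x : M, a = x * b

/-- `a <_L b` iff `a ≤_L b` and not `b ≤_L a`. -/
def ltL {M : Type*} [Monoid M] (a b : M) : Prop := leL a b ∧ ¬ leL b a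

/-- The Dedekind height function: `height x` is the largest `k` such that there is a chain
`x₀ >_J x₁ >_J ⋯ >_J x_k = x`. -/
noncomputable def height {M : Type*} [Monoid M] (x : M) : ℕ :=
  sSup {k | ∃ c : ℕ → M, c k = x ∧ ∀ i < k, ltJ (c (i + 1)) (c i)}

variable {A S : Type*} [Semigroup S]

/-- The edge `(s, a, s·θ(a))` of the right Cayley graph of `(S,A)` is a transition edge:
there is no path in the right Cayley graph from `s·θ(a)` back to `s`. -/
def IsTransitionEdge (θ : FreeMonoid A →* WithOne S) (s : WithOne S) (a : A) : Prop :=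
  ¬ ∃ w : FreeMonoid A, s * θ (FreeMonoid.of a) * θ w = s

/-- The (ordered) sequence of transition edges along the path of the right Cayley graph
starting at `s` and reading the word `u`; an edge is recorded as a pair (source, label). -/
noncomputable def transEdgesFrom (θ : FreeMonoid A →* WithOne S) :
    WithOne S → List A → List (WithOne S × A)
  | _, [] => []
  | s, a :: w =>
      (if IsTransitionEdge θ s a then [(s, a)] else []) ++
        transEdgesFrom θ (s * θ (FreeMonoid.of a)) w

/-- The sequence of transition edges of the path starting at `1` reading `u`. -/
noncomputable def transEdges (θ : FreeMonoid A →* WithOne S) (u : FreeMonoid A) :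
    List (WithOne S × A) :=
  transEdgesFrom θ 1 (FreeMonoid.toList u)

/-- The congruence (`τ_r`, together with `(1,1)`) defining the right Karnofsky–Rhodes
expansion: two words of `A^*` represent the same element of `KR_right(S,A)¹` iff they are
both empty or both nonempty, they have the same image in `S¹` and the same sequence of
transition edges. -/
def KRrel (θ : FreeMonoid A →* WithOne S) (u v : FreeMonoid A) : Prop :=
  (u = 1 ∧ v = 1) ∨
    (u ≠ 1 ∧ v ≠ 1 ∧ θ u = θ v ∧ transEdges θ u = transEdges θ v)

/-- Green's quasi-order `≤_J` on `T¹ = KR_right(S,A)¹`, expressed on word representatives: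
`u ≤_J v` iff `u = p v q` holds in `T¹` for some `p, q ∈ T¹`. -/
def leJT (θ : FreeMonoid A →* WithOne S) (u v : FreeMonoid A) : Prop :=
  ∃ p q : FreeMonoid A, KRrel θ u (p * v * q)

/-- `<_J` on `T¹ = KR_right(S,A)¹`, expressed on word representatives. -/
def ltJT (θ : FreeMonoid A →* WithOne S) (u v : FreeMonoid A) : Prop :=
  leJT θ u v ∧ ¬ leJT θ v u

/-- The Dedekind height function on `T¹ = KR_right(S,A)¹`, expressed on word
representatives: the largest `k` such that there is a chain
`t₀ >_J t₁ >_J ⋯ >_J t_k = t` in `T¹`. -/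
noncomputable def heightT (θ : FreeMonoid A →* WithOne S) (u : FreeMonoid A) : ℕ :=
  sSup {k | ∃ c : ℕ → FreeMonoid A, KRrel θ (c k) u ∧ ∀ i < k, ltJT θ (c (i + 1)) (c i)}

/-- `ℓ = 2 · max { h(s) : s ∈ S¹ }`. -/
noncomputable def ell (S : Type*) [Semigroup S] : ℕ :=
  2 * sSup (Set.range fun s : WithOne S => height s)

/-- `ξ(u,v)`: the largest `i` (with `0 ≤ i ≤ m`, `m` the number of transition edges of `u`)
such that the first `i` transition edges of `u` and of `v` agree. -/
noncomputable def xi (θ : FreeMonoid A →* WithOne S) (u v : FreeMonoid A) : ℕ :=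
  sSup {i | i ≤ (transEdges θ u).length ∧
    (transEdges θ u).take i = (transEdges θ v).take i}

/-- The endpoint of an edge `(s, a)` of the right Cayley graph, namely `s·θ(a)`. -/
def edgeEnd (θ : FreeMonoid A →* WithOne S) (e : WithOne S × A) : WithOne S :=
  e.1 * θ (FreeMonoid.of e.2)

/-- The Lyndon–Chiswell length function `D` on `T¹ = KR_right(S,A)¹`, expressed on word
representatives.  With `k = ξ(u,v)` (and indexing the transition edges from `1` as in the
paper, so that `E_k` sits at list index `k-1`):
`D(u,v) = ℓ` if `u = v` in `T¹`; `D(u,v) = 0` if `u ≠ v` in `T¹` and `k = 0`;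
`D(u,v) = 2·h(end(E_k))` if `k > 0`, `E_{k+1}` and `E'_{k+1}` both exist and have the same
endpoint; and `D(u,v) = 2·h(end(E_k)) - 1` in all remaining cases. -/
noncomputable def lcD (θ : FreeMonoid A →* WithOne S) (u v : FreeMonoid A) : ℕ :=
  if KRrel θ u v then ell S
  else if xi θ u v = 0 then 0
  else
    let k := xi θ u v
    let base := (transEdges θ u)[k - 1]?.elim 0 fun e => height (edgeEnd θ e)
    if ∃ e e', (transEdges θ u)[k]? = some e ∧ (transEdges θ v)[k]? = some e' ∧
        edgeEnd θ e = edgeEnd θ e'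
    then 2 * base
    else 2 * base - 1

/-- The relation `∼` on `C = {(k,α) : 0 ≤ k ≤ ℓ, α ∈ T¹}`:
`(k,α) ∼ (k',β)` iff `k = k'` and `D(α,β) ≥ k`. -/
def simRel (θ : FreeMonoid A →* WithOne S)
    (p q : {p : ℕ × FreeMonoid A // p.1 ≤ ell S}) : Prop :=
  p.val.1 = q.val.1 ∧ lcD θ p.val.2 q.val.2 ≥ p.val.1

/-- The vertex set of the Chiswell tree: `∼`-classes `[k,α]`. -/
def CVert (θ : FreeMonoid A →* WithOne S) : Type _ := Quot (simRel θ)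

/-- The edge relation of the Chiswell graph: the edges are `[k,α] — [k+1,α]`
for `0 ≤ k < ℓ` and `α ∈ T¹`. -/
def edgeRel (θ : FreeMonoid A →* WithOne S) (v w : CVert θ) : Prop :=
  ∃ (k : ℕ) (α : FreeMonoid A) (hk : k + 1 ≤ ell S),
    v = Quot.mk (simRel θ) ⟨(k, α), Nat.le_of_succ_le hk⟩ ∧
    w = Quot.mk (simRel θ) ⟨(k + 1, α), hk⟩

/-- The Chiswell graph `𝒞`. -/
def CGraph (θ : FreeMonoid A →* WithOne S) : SimpleGraph (CVert θ) :=
  SimpleGraph.fromRel (edgeRel θ)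

/-- The depth function of the Chiswell tree: `δ([k,α]) = k`. -/
def depth (θ : FreeMonoid A →* WithOne S) : CVert θ → ℕ :=
  Quot.lift (fun p => p.val.1) (fun _ _ h => h.1)

end KRHolonomy


section AuxLemmas

open KRHolonomy

/-! ### Basic facts about Green's quasi-orders -/

theorem KRH.leJ_refl {M : Type*} [Monoid M] (a : M) : leJ a a := ⟨1, 1, by simp⟩

theorem KRH.leJ_trans {M : Type*} [Monoid M] {a b c : M} (h1 : leJ a b) (h2 : leJ b c) :
    leJ a c := by
  obtain ⟨x, y, rfl⟩ := h1; obtain ⟨x', y', rfl⟩ := h2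
  exact ⟨x * x', y' * y, by simp [mul_assoc]⟩

theorem KRH.leJ_of_leR {M : Type*} [Monoid M] {a b : M} (h : leR a b) : leJ a b := by
  obtain ⟨x, rfl⟩ := h; exact ⟨1, x, by simp [mul_assoc]⟩

theorem KRH.ltJ_trans {M : Type*} [Monoid M] {a b c : M} (h1 : ltJ a b) (h2 : ltJ b c) :
    ltJ a c :=
  ⟨KRH.leJ_trans h1.1 h2.1, fun h => h2.2 (KRH.leJ_trans h h1.1)⟩

theorem KRH.ltJ_of_ltJ_of_leJ {M : Type*} [Monoid M] {a b c : M} (h1 : ltJ a b)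
    (h2 : leJ b c) : ltJ a c :=
  ⟨KRH.leJ_trans h1.1 h2, fun h => h1.2 (KRH.leJ_trans h2 h)⟩

theorem KRH.ltJ_irrefl {M : Type*} [Monoid M] {a : M} (h : ltJ a a) : False := h.2 h.1

/-! ### Idempotent powers and stability in finite monoids -/

theorem KRH.exists_idem_pow {M : Type*} [Monoid M] [Finite M] (f : M) :
    ∃ n : ℕ, 0 < n ∧ f ^ n * f ^ n = f ^ n := by
  obtain ⟨i, j, hne, hpow⟩ := Finite.exists_ne_map_eq_of_infinite (fun n : ℕ => f ^ n)
  wlog hij : i < j generalizing i j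
  · exact this j i hne.symm hpow.symm (by omega)
  have hd : 0 < j - i := by omega
  have key : ∀ m, i ≤ m → f ^ m = f ^ (m + (j - i)) := by
    intro m hm
    have : f ^ m = f ^ i * f ^ (m - i) := by rw [← pow_add]; congr 1; omega
    rw [this, hpow, ← pow_add]
    congr 1; omega
  have key2 : ∀ c m, i ≤ m → f ^ m = f ^ (m + c * (j - i)) := by
    intro c
    induction c with
    | zero => simp
    | succ c ih =>
      intro m hm
      rw [ih m hm, key (m + c * (j - i)) (by omega)]
      congr 1; ring
  refine ⟨(i + 1) * (j - i), by positivity, ?_⟩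
  rw [← pow_add]
  have := key2 (i + 1) ((i + 1) * (j - i)) (by nlinarith)
  rw [← this]

theorem KRH.stability {M : Type*} [Monoid M] [Finite M] {a b : M} (h1 : leR a b)
    (h2 : leJ b a) : leR b a := by
  obtain ⟨s, rfl⟩ := h1
  obtain ⟨x, y, hb⟩ := h2
  have step : b = x * b * (s * y) := by
    rw [mul_assoc]; conv_lhs => rw [hb, mul_assoc, mul_assoc]
  have key : ∀ n, b = x ^ n * b * (s * y) ^ n := by
    intro n
    induction n with
    | zero => simp
    | succ n ih =>
      calc b = x * b * (s * y) := step
        _ = x * (x ^ n * b * (s * y) ^ n) * (s * y) := by rw [← ih]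
        _ = x ^ (n + 1) * b * (s * y) ^ (n + 1) := by
            rw [pow_succ' x n, pow_succ (s * y) n]; simp [mul_assoc]
  obtain ⟨n, hn, hidem⟩ := KRH.exists_idem_pow (s * y)
  have h4 : b * (s * y) ^ n = b := by
    conv_lhs => rw [key n]
    rw [mul_assoc, mul_assoc, hidem, ← mul_assoc]
    exact (key n).symm
  obtain ⟨m, rfl⟩ : ∃ m, n = m + 1 := ⟨n - 1, by omega⟩
  refine ⟨y * (s * y) ^ m, ?_⟩
  calc b = b * (s * y) ^ (m + 1) := h4.symm
    _ = b * s * (y * (s * y) ^ m) := by rw [pow_succ' (s * y) m]; simp [mul_assoc]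

/-! ### Facts about the Dedekind height -/

/-- The set of lengths of strict `<_J` chains ending at `x`. -/
def KRH.chainSet {M : Type*} [Monoid M] (x : M) : Set ℕ :=
  {k | ∃ c : ℕ → M, c k = x ∧ ∀ i < k, ltJ (c (i + 1)) (c i)}

theorem KRH.height_eq {M : Type*} [Monoid M] (x : M) : height x = sSup (KRH.chainSet x) := rfl

theorem KRH.chainSet_nonempty {M : Type*} [Monoid M] (x : M) : (KRH.chainSet x).Nonempty :=
  ⟨0, fun _ => x, rfl, fun i hi => absurd hi (Nat.not_lt_zero i)⟩

theorem KRH.chain_strict {M : Type*} [Monoid M] {c : ℕ → M} {k : ℕ}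
    (hc : ∀ i < k, ltJ (c (i + 1)) (c i)) :
    ∀ i j, i < j → j ≤ k → ltJ (c j) (c i) := by
  intro i j
  induction j with
  | zero => omega
  | succ j ih =>
    intro hij hjk
    rcases Nat.lt_or_ge i j with h' | h'
    · exact KRH.ltJ_trans (hc j (by omega)) (ih h' (by omega))
    · have : i = j := by omega
      subst this
      exact hc i (by omega)

theorem KRH.chainSet_lt_card {M : Type*} [Monoid M] [Finite M] (x : M) :
    ∀ k ∈ KRH.chainSet x, k < Nat.card M := by
  rintro k ⟨c, hck, hc⟩
  have hinj : Function.Injective (fun i : Fin (k + 1) => c i.val) := by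
    intro i j hij
    by_contra hne
    have hne' : i.val ≠ j.val := fun h => hne (Fin.ext h)
    rcases Nat.lt_or_ge i.val j.val with h' | h'
    · have := KRH.chain_strict hc i.val j.val h' (by omega)
      rw [show c i.val = c j.val from hij] at this
      exact KRH.ltJ_irrefl this
    · have := KRH.chain_strict hc j.val i.val (by omega) (by omega)
      rw [show c i.val = c j.val from hij] at this
      exact KRH.ltJ_irrefl this
  have := Nat.card_le_card_of_injective _ hinj
  simp only [Nat.card_eq_fintype_card, Fintype.card_fin] at this
  omega

theorem KRH.chainSet_bddAbove {M : Type*} [Monoid M] [Finite M] (x : M) :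
    BddAbove (KRH.chainSet x) :=
  ⟨Nat.card M, fun k hk => le_of_lt (KRH.chainSet_lt_card x k hk)⟩

theorem KRH.height_mem {M : Type*} [Monoid M] [Finite M] (x : M) :
    height x ∈ KRH.chainSet x :=
  Nat.sSup_mem (KRH.chainSet_nonempty x) (KRH.chainSet_bddAbove x)

theorem KRH.height_lt_of_ltJ {M : Type*} [Monoid M] [Finite M] {x y : M} (h : ltJ x y) :
    height y < height x := by
  obtain ⟨c, hck, hc⟩ := KRH.height_mem y
  set m := height y with hm
  have hmem : m + 1 ∈ KRH.chainSet x := by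
    refine ⟨fun i => if i = m + 1 then x else c i, by simp, ?_⟩
    intro i hi
    show ltJ (if i + 1 = m + 1 then x else c (i + 1)) (if i = m + 1 then x else c i)
    by_cases hi' : i = m
    · rw [if_pos (by omega), if_neg (by omega), hi', hck]
      exact h
    · rw [if_neg (by omega), if_neg (by omega)]
      exact hc i (by omega)
  calc m < m + 1 := Nat.lt_succ_self m
    _ ≤ height x := le_csSup (KRH.chainSet_bddAbove x) hmem

instance KRH.instFiniteWithOne {S : Type*} [Finite S] : Finite (WithOne S) := by
  have := Fintype.ofFinite S
  exact inferInstanceAs (Finite (Option S))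

theorem KRH.height_le_card {M : Type*} [Monoid M] [Finite M] (x : M) :
    height x ≤ Nat.card M :=
  csSup_le (KRH.chainSet_nonempty x)
    (fun k hk => le_of_lt (KRH.chainSet_lt_card x k hk))

theorem KRH.two_height_le_ell {A S : Type*} [Semigroup S] [Finite S]
    (θ : FreeMonoid A →* WithOne S) (x : WithOne S) : 2 * height x ≤ ell S := by
  have hbdd : BddAbove (Set.range fun s : WithOne S => height s) := by
    refine ⟨Nat.card (WithOne S), ?_⟩
    rintro _ ⟨s, rfl⟩
    exact KRH.height_le_card s
  have : height x ≤ sSup (Set.range fun s : WithOne S => height s) :=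
    le_csSup hbdd ⟨x, rfl⟩
  unfold ell
  omega

/-! ### Facts about transition edges -/

variable {A S : Type*} [Semigroup S]

theorem KRH.transEdgesFrom_cons (θ : FreeMonoid A →* WithOne S) (s : WithOne S) (a : A)
    (w : List A) :
    transEdgesFrom θ s (a :: w) =
      (if IsTransitionEdge θ s a then [(s, a)] else []) ++
        transEdgesFrom θ (s * θ (FreeMonoid.of a)) w := by
  rw [transEdgesFrom]

theorem KRH.transEdgesFrom_nil (θ : FreeMonoid A →* WithOne S) (s : WithOne S) :
    transEdgesFrom θ s [] = [] := by
  rw [transEdgesFrom]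

theorem KRH.transEdgesFrom_append (θ : FreeMonoid A →* WithOne S) :
    ∀ (u : List A) (s : WithOne S) (v : List A),
      transEdgesFrom θ s (u ++ v) =
        transEdgesFrom θ s u ++ transEdgesFrom θ (s * θ (FreeMonoid.ofList u)) v := by
  intro u
  induction u with
  | nil =>
    intro s v
    simp [KRH.transEdgesFrom_nil, show (FreeMonoid.ofList ([] : List A)) = 1 from rfl]
  | cons a u ih =>
    intro s v
    rw [List.cons_append, KRH.transEdgesFrom_cons, KRH.transEdgesFrom_cons, ih,
      List.append_assoc]
    congr 3
    rw [show FreeMonoid.ofList (a :: u) = FreeMonoid.of a * FreeMonoid.ofList u by simp,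
      map_mul, ← mul_assoc]

theorem KRH.transEdges_mul (θ : FreeMonoid A →* WithOne S) (u v : FreeMonoid A) :
    transEdges θ (u * v) =
      transEdges θ u ++ transEdgesFrom θ (θ u) (FreeMonoid.toList v) := by
  unfold transEdges
  rw [show FreeMonoid.toList (u * v) = FreeMonoid.toList u ++ FreeMonoid.toList v by simp,
    KRH.transEdgesFrom_append, one_mul,
    show FreeMonoid.ofList (FreeMonoid.toList u) = u by simp]

/-! ### KRrel is a right congruence -/

theorem KRH.fm_mul_eq_one {u v : FreeMonoid A} (h : u * v = 1) : u = 1 ∧ v = 1 := by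
  have h' : FreeMonoid.toList u ++ FreeMonoid.toList v = [] := congrArg FreeMonoid.toList h
  have h2 := List.append_eq_nil_iff.mp h'
  exact ⟨FreeMonoid.toList.injective (by simp [h2.1]),
    FreeMonoid.toList.injective (by simp [h2.2])⟩

theorem KRH.KRrel_refl (θ : FreeMonoid A →* WithOne S) (u : FreeMonoid A) : KRrel θ u u := by
  by_cases h : u = 1
  · exact Or.inl ⟨h, h⟩
  · exact Or.inr ⟨h, h, rfl, rfl⟩

theorem KRH.KRrel_mul_right {θ : FreeMonoid A →* WithOne S} {u v : FreeMonoid A}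
    (h : KRrel θ u v) (w : FreeMonoid A) : KRrel θ (u * w) (v * w) := by
  rcases h with ⟨h1, h2⟩ | ⟨h1, h2, h3, h4⟩
  · subst h1; subst h2
    simpa using KRH.KRrel_refl θ w
  · refine Or.inr ⟨fun hc => h1 (KRH.fm_mul_eq_one hc).1,
      fun hc => h2 (KRH.fm_mul_eq_one hc).1, by rw [map_mul, map_mul, h3], ?_⟩
    rw [KRH.transEdges_mul, KRH.transEdges_mul, h3, h4]

/-! ### The chain structure along transition edges -/

theorem KRH.leR_refl {M : Type*} [Monoid M] (a : M) : leR a a := ⟨1, (mul_one a).symm⟩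

theorem KRH.leR_trans {M : Type*} [Monoid M] {a b c : M} (h1 : leR a b) (h2 : leR b c) :
    leR a c := by
  obtain ⟨x, rfl⟩ := h1; obtain ⟨y, rfl⟩ := h2
  exact ⟨y * x, by rw [mul_assoc]⟩

theorem KRH.transEdgesFrom_spec (θ : FreeMonoid A →* WithOne S) :
    ∀ (w : List A) (s : WithOne S),
      (∀ e ∈ transEdgesFrom θ s w, IsTransitionEdge θ e.1 e.2 ∧ leR e.1 s) ∧
        List.Chain' (fun e e' => leR e'.1 (edgeEnd θ e)) (transEdgesFrom θ s w) := by
  intro w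
  induction w with
  | nil => intro s; simp [KRH.transEdgesFrom_nil]; exact List.isChain_nil
  | cons a w ih =>
    intro s
    obtain ⟨ih1, ih2⟩ := ih (s * θ (FreeMonoid.of a))
    have hRstep : ∀ e ∈ transEdgesFrom θ (s * θ (FreeMonoid.of a)) w, leR e.1 s := by
      intro e he
      exact KRH.leR_trans (ih1 e he).2 ⟨θ (FreeMonoid.of a), rfl⟩
    by_cases h : IsTransitionEdge θ s a
    · rw [KRH.transEdgesFrom_cons, if_pos h]
      constructor
      · rintro e he
        rcases List.mem_append.mp he with he' | he'
        · rcases List.mem_singleton.mp he' with rfl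
          exact ⟨h, KRH.leR_refl s⟩
        · exact ⟨(ih1 e he').1, hRstep e he'⟩
      · rw [List.singleton_append]
        refine List.isChain_cons.mpr ⟨?_, ih2⟩
        intro e he
        have hmem : e ∈ transEdgesFrom θ (s * θ (FreeMonoid.of a)) w :=
          List.mem_of_mem_head? he
        exact (ih1 e hmem).2
    · rw [KRH.transEdgesFrom_cons, if_neg h, List.nil_append]
      exact ⟨fun e he => ⟨(ih1 e he).1, hRstep e he⟩, ih2⟩

theorem KRH.edgeEnd_leJ (θ : FreeMonoid A →* WithOne S) (e : (WithOne S) × A) :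
    leJ (edgeEnd θ e) e.1 :=
  KRH.leJ_of_leR ⟨θ (FreeMonoid.of e.2), rfl⟩

theorem KRH.ltJ_edgeEnd [Finite S] {θ : FreeMonoid A →* WithOne S}
    (hgen : ∀ s : S, ∃ u : FreeMonoid A, θ u = (s : WithOne S)) {t : WithOne S} {a : A}
    (h : IsTransitionEdge θ t a) : ltJ (t * θ (FreeMonoid.of a)) t := by
  constructor
  · exact ⟨1, θ (FreeMonoid.of a), by rw [one_mul]⟩
  · intro hle
    have hR : leR t (t * θ (FreeMonoid.of a)) :=
      KRH.stability ⟨θ (FreeMonoid.of a), rfl⟩ hle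
    obtain ⟨z, hz⟩ := hR
    cases z with
    | one =>
      exact h ⟨1, by simpa using hz.symm⟩
    | coe z' =>
      obtain ⟨u, hu⟩ := hgen z'
      exact h ⟨u, by rw [hu]; exact hz.symm⟩

theorem KRH.chain_leJ (θ : FreeMonoid A →* WithOne S) (s : WithOne S) (w : List A)
    {i j : ℕ} (hij : i < j) (hj : j < (transEdgesFrom θ s w).length) :
    leJ ((transEdgesFrom θ s w)[j]).1
      (edgeEnd θ ((transEdgesFrom θ s w)[i]'(by omega))) := by
  obtain ⟨-, hch⟩ := KRH.transEdgesFrom_spec θ w s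
  replace hch := List.isChain_iff_getElem.mp hch
  induction j with
  | zero => omega
  | succ j ihj =>
    have step : leR (((transEdgesFrom θ s w)[j + 1]).1)
        (edgeEnd θ ((transEdgesFrom θ s w)[j]'(by omega))) := by
      have := hch j (by omega)
      simpa [List.get_eq_getElem] using this
    rcases Nat.lt_or_ge i j with h' | h'
    · exact KRH.leJ_trans
        (KRH.leJ_trans (KRH.leJ_of_leR step) (KRH.edgeEnd_leJ θ _))
        (ihj h' (by omega))
    · have : i = j := by omega
      subst this
      exact KRH.leJ_of_leR step

theorem KRH.chain_ltJ [Finite S] {θ : FreeMonoid A →* WithOne S}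
    (hgen : ∀ s : S, ∃ u : FreeMonoid A, θ u = (s : WithOne S)) (s : WithOne S)
    (w : List A) {i j : ℕ} (hij : i < j) (hj : j < (transEdgesFrom θ s w).length) :
    ltJ (edgeEnd θ ((transEdgesFrom θ s w)[j]))
      (edgeEnd θ ((transEdgesFrom θ s w)[i]'(by omega))) := by
  have htr : IsTransitionEdge θ ((transEdgesFrom θ s w)[j]).1
      ((transEdgesFrom θ s w)[j]).2 :=
    ((KRH.transEdgesFrom_spec θ w s).1 _ (List.getElem_mem hj)).1
  have hlt : ltJ (edgeEnd θ ((transEdgesFrom θ s w)[j]))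
      (((transEdgesFrom θ s w)[j]).1) := KRH.ltJ_edgeEnd hgen htr
  exact KRH.ltJ_of_ltJ_of_leJ hlt (KRH.chain_leJ θ s w hij hj)

/-! ### Facts about `xi` -/

/-- The defining set of `xi`. -/
def KRH.xiSet (θ : FreeMonoid A →* WithOne S) (u v : FreeMonoid A) : Set ℕ :=
  {i | i ≤ (transEdges θ u).length ∧ (transEdges θ u).take i = (transEdges θ v).take i}

theorem KRH.xi_eq (θ : FreeMonoid A →* WithOne S) (u v : FreeMonoid A) :
    xi θ u v = sSup (KRH.xiSet θ u v) := rfl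

theorem KRH.xiSet_nonempty (θ : FreeMonoid A →* WithOne S) (u v : FreeMonoid A) :
    (KRH.xiSet θ u v).Nonempty := ⟨0, Nat.zero_le _, by simp⟩

theorem KRH.xiSet_bddAbove (θ : FreeMonoid A →* WithOne S) (u v : FreeMonoid A) :
    BddAbove (KRH.xiSet θ u v) := ⟨(transEdges θ u).length, fun i hi => hi.1⟩

theorem KRH.xi_mem (θ : FreeMonoid A →* WithOne S) (u v : FreeMonoid A) :
    xi θ u v ∈ KRH.xiSet θ u v :=
  Nat.sSup_mem (KRH.xiSet_nonempty θ u v) (KRH.xiSet_bddAbove θ u v)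

theorem KRH.le_xi (θ : FreeMonoid A →* WithOne S) {u v : FreeMonoid A} {i : ℕ}
    (h : i ∈ KRH.xiSet θ u v) : i ≤ xi θ u v :=
  le_csSup (KRH.xiSet_bddAbove θ u v) h

theorem KRH.xi_le (θ : FreeMonoid A →* WithOne S) {u v : FreeMonoid A} {n : ℕ}
    (h : ∀ i ∈ KRH.xiSet θ u v, i ≤ n) : xi θ u v ≤ n :=
  csSup_le (KRH.xiSet_nonempty θ u v) h

/-! ### List helper lemmas -/

theorem KRH.take_eq_getElem {α : Type*} {l l' : List α} {i k : ℕ}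
    (h : l.take i = l'.take i) (hk : k < i) (h1 : k < l.length) (h2 : k < l'.length) :
    l[k] = l'[k] := by
  have := congrArg (fun t => t[k]?) h
  simpa [List.getElem?_take, hk, List.getElem?_eq_getElem, h1, h2] using this

theorem KRH.take_succ_eq {α : Type*} {l l' : List α} {k : ℕ} (h : l.take k = l'.take k)
    (h1 : k < l.length) (h2 : k < l'.length) (he : l[k] = l'[k]) :
    l.take (k + 1) = l'.take (k + 1) := by
  rw [List.take_succ, List.take_succ, h, List.getElem?_eq_getElem h1,
    List.getElem?_eq_getElem h2, he]

theorem KRH.length_le_of_take_eq {α : Type*} {l l' : List α} {k : ℕ}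
    (h : l.take k = l'.take k) (h1 : k ≤ l.length) : k ≤ l'.length := by
  have := congrArg List.length h
  simp only [List.length_take] at this
  omega


theorem KRH.elim_some {α β : Type*} (a : α) (b : β) (f : α → β) :
    (Option.some a).elim b f = f a := rfl

theorem KRH.getElem?_append_some {α : Type*} {l₁ l₂ : List α} {n : ℕ} (h : n < l₁.length) :
    (l₁ ++ l₂)[n]? = some (l₁[n]) := by
  rw [List.getElem?_append]
  simp [h, List.getElem?_eq_getElem]

theorem KRH.transEdges_chain_ltJ [Finite S] {θ : FreeMonoid A →* WithOne S}
    (hgen : ∀ s : S, ∃ u : FreeMonoid A, θ u = (s : WithOne S)) (u : FreeMonoid A)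
    {i j : ℕ} (hij : i < j) (hj : j < (transEdges θ u).length) :
    ltJ (edgeEnd θ ((transEdges θ u)[j]))
      (edgeEnd θ ((transEdges θ u)[i]'(by omega))) :=
  KRH.chain_ltJ hgen 1 (FreeMonoid.toList u) hij hj

theorem KRH.lcD_of_ne (θ : FreeMonoid A →* WithOne S) {u v : FreeMonoid A}
    (h1 : ¬ KRrel θ u v) (h2 : xi θ u v ≠ 0) :
    lcD θ u v =
      if ∃ e e', (transEdges θ u)[xi θ u v]? = some e ∧
          (transEdges θ v)[xi θ u v]? = some e' ∧ edgeEnd θ e = edgeEnd θ e'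
      then 2 * ((transEdges θ u)[xi θ u v - 1]?.elim 0 fun e => height (edgeEnd θ e))
      else 2 * ((transEdges θ u)[xi θ u v - 1]?.elim 0 fun e => height (edgeEnd θ e)) - 1
    := by
  unfold lcD
  rw [if_neg h1, if_neg h2]

end AuxLemmas

open KRHolonomy in
/-- For all `α, β, γ ∈ T¹ = KR_right(S,A)¹`, `D(αγ, βγ) ≥ D(α, β)`. -/
theorem lcD_mul_right_ge {A S : Type*} [Finite A] [Semigroup S] [Finite S]
    (θ : FreeMonoid A →* WithOne S)
    (hgen : ∀ s : S, ∃ u : FreeMonoid A, θ u = (s : WithOne S))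
    (hproper : ∀ u : FreeMonoid A, θ u = 1 → u = 1)
    (α β γ : FreeMonoid A) :
    lcD θ (α * γ) (β * γ) ≥ lcD θ α β := by
  classical
  by_cases hab : KRrel θ α β
  · have h2 : KRrel θ (α * γ) (β * γ) := KRH.KRrel_mul_right hab γ
    unfold lcD
    rw [if_pos hab, if_pos h2]
  by_cases hk0 : xi θ α β = 0
  · unfold lcD
    rw [if_neg hab, if_pos hk0]
    exact Nat.zero_le _
  -- main case
  have hGE : transEdges θ (α * γ) =
      transEdges θ α ++ transEdgesFrom θ (θ α) (FreeMonoid.toList γ) :=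
    KRH.transEdges_mul θ α γ
  have hGE' : transEdges θ (β * γ) =
      transEdges θ β ++ transEdgesFrom θ (θ β) (FreeMonoid.toList γ) :=
    KRH.transEdges_mul θ β γ
  obtain ⟨hkm, htake⟩ := KRH.xi_mem θ α β
  have hkn : xi θ α β ≤ (transEdges θ β).length := KRH.length_le_of_take_eq htake hkm
  have hk1 : xi θ α β - 1 < (transEdges θ α).length := by omega
  have hk1' : xi θ α β - 1 < (transEdges θ β).length := by omega
  -- xi θ α β belongs to the xi-set for the products
  have hmemk : xi θ α β ∈ KRH.xiSet θ (α * γ) (β * γ) := by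
    constructor
    · rw [hGE, List.length_append]; omega
    · rw [hGE, hGE', List.take_append_of_le_length hkm,
        List.take_append_of_le_length hkn, htake]
  by_cases hP : ∃ e e', (transEdges θ α)[xi θ α β]? = some e ∧
      (transEdges θ β)[xi θ α β]? = some e' ∧ edgeEnd θ e = edgeEnd θ e'
  · -- even case: D(α,β) = 2·h(end E_k); show D(αγ,βγ) equals the same value
    obtain ⟨e, e', he, he', hee⟩ := hP
    have hkE : xi θ α β < (transEdges θ α).length := by
      by_contra hc
      rw [List.getElem?_eq_none (by omega)] at he
      exact absurd he (by simp)
    have hkE' : xi θ α β < (transEdges θ β).length := by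
      by_contra hc
      rw [List.getElem?_eq_none (by omega)] at he'
      exact absurd he' (by simp)
    have heE : e = (transEdges θ α)[xi θ α β] := by
      rw [List.getElem?_eq_getElem hkE] at he
      exact (Option.some_injective _ he).symm
    have heE' : e' = (transEdges θ β)[xi θ α β] := by
      rw [List.getElem?_eq_getElem hkE'] at he'
      exact (Option.some_injective _ he').symm
    have hne : (transEdges θ α)[xi θ α β] ≠ (transEdges θ β)[xi θ α β] := by
      intro heq
      have hmem : xi θ α β + 1 ∈ KRH.xiSet θ α β :=
        ⟨by omega, KRH.take_succ_eq htake hkE hkE' heq⟩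
      have := KRH.le_xi θ hmem
      omega
    have hkElen : xi θ α β < (transEdges θ (α * γ)).length := by
      rw [hGE, List.length_append]; omega
    have hkElen' : xi θ α β < (transEdges θ (β * γ)).length := by
      rw [hGE', List.length_append]; omega
    have hGk : (transEdges θ (α * γ))[xi θ α β]'hkElen = (transEdges θ α)[xi θ α β] := by
      rw [List.getElem_of_eq hGE, List.getElem_append_left hkE]
    have hGk' : (transEdges θ (β * γ))[xi θ α β]'hkElen' = (transEdges θ β)[xi θ α β] := by
      rw [List.getElem_of_eq hGE', List.getElem_append_left hkE']
    have hab2 : ¬ KRrel θ (α * γ) (β * γ) := by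
      rintro (⟨h1, h2⟩ | ⟨-, -, -, h4⟩)
      · exact hab (by
          rw [(KRH.fm_mul_eq_one h1).1, (KRH.fm_mul_eq_one h2).1]
          exact KRH.KRrel_refl θ 1)
      · apply hne
        rw [← hGk, ← hGk']
        congr 1
    have hxi2 : xi θ (α * γ) (β * γ) = xi θ α β := by
      refine le_antisymm ?_ (KRH.le_xi θ hmemk)
      refine KRH.xi_le θ ?_
      intro i hi
      by_contra hgt
      push_neg at hgt
      obtain ⟨hi1, hi2⟩ := hi
      have hlen2 : i ≤ (transEdges θ (β * γ)).length :=
        KRH.length_le_of_take_eq hi2 hi1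
      have := KRH.take_eq_getElem hi2 hgt (by omega) (by omega)
      apply hne
      rw [← hGk, ← hGk']
      exact this
    rw [KRH.lcD_of_ne θ hab2 (by rw [hxi2]; exact hk0), KRH.lcD_of_ne θ hab hk0, hxi2]
    have hP' : ∃ e e', (transEdges θ (α * γ))[xi θ α β]? = some e ∧
        (transEdges θ (β * γ))[xi θ α β]? = some e' ∧ edgeEnd θ e = edgeEnd θ e' := by
      refine ⟨(transEdges θ α)[xi θ α β], (transEdges θ β)[xi θ α β], ?_, ?_, ?_⟩
      · rw [hGE, KRH.getElem?_append_some hkE]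
      · rw [hGE', KRH.getElem?_append_some hkE']
      · rw [← heE, ← heE']; exact hee
    rw [if_pos hP', if_pos ⟨e, e', he, he', hee⟩]
    have hbase : (transEdges θ (α * γ))[xi θ α β - 1]? =
        (transEdges θ α)[xi θ α β - 1]? := by
      rw [hGE, KRH.getElem?_append_some hk1, List.getElem?_eq_getElem hk1]
    rw [hbase]
  · -- odd case: D(α,β) = 2·h(end E_k) - 1
    have hbasek : (transEdges θ α)[xi θ α β - 1]?.elim 0 (fun e => height (edgeEnd θ e)) =
        height (edgeEnd θ ((transEdges θ α)[xi θ α β - 1]'hk1)) := by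
      rw [List.getElem?_eq_getElem hk1, KRH.elim_some]
    by_cases hab2 : KRrel θ (α * γ) (β * γ)
    · -- products are equal in T¹ : D = ℓ
      conv_lhs => rw [lcD, if_pos hab2]
      rw [KRH.lcD_of_ne θ hab hk0, if_neg hP, hbasek]
      have := KRH.two_height_le_ell θ (edgeEnd θ ((transEdges θ α)[xi θ α β - 1]'hk1))
      omega
    · have hkk' : xi θ α β ≤ xi θ (α * γ) (β * γ) := KRH.le_xi θ hmemk
      have hk'0 : xi θ (α * γ) (β * γ) ≠ 0 := by omega
      obtain ⟨hk'm, htake'⟩ := KRH.xi_mem θ (α * γ) (β * γ)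
      have hk'1 : xi θ (α * γ) (β * γ) - 1 < (transEdges θ (α * γ)).length := by omega
      rw [KRH.lcD_of_ne θ hab2 hk'0, KRH.lcD_of_ne θ hab hk0, if_neg hP, hbasek]
      have hbasek' : (transEdges θ (α * γ))[xi θ (α * γ) (β * γ) - 1]?.elim 0
          (fun e => height (edgeEnd θ e)) =
          height (edgeEnd θ ((transEdges θ (α * γ))[xi θ (α * γ) (β * γ) - 1]'hk'1)) := by
        rw [List.getElem?_eq_getElem hk'1, KRH.elim_some]
      rw [hbasek']
      -- the base for the products dominates the base for (α, β)
      have hbb : height (edgeEnd θ ((transEdges θ α)[xi θ α β - 1]'hk1)) ≤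
          height (edgeEnd θ ((transEdges θ (α * γ))[xi θ (α * γ) (β * γ) - 1]'hk'1)) := by
        rcases eq_or_lt_of_le hkk' with heq | hlt
        · have h1 : (transEdges θ (α * γ))[xi θ (α * γ) (β * γ) - 1]? =
              some ((transEdges θ α)[xi θ α β - 1]'hk1) := by
            rw [← heq, hGE, KRH.getElem?_append_some hk1]
          rw [List.getElem?_eq_getElem hk'1] at h1
          rw [Option.some_injective _ h1]
        · have hij : xi θ α β - 1 < xi θ (α * γ) (β * γ) - 1 := by omega
          have := KRH.transEdges_chain_ltJ hgen (α * γ) hij hk'1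
          have hlt2 := KRH.height_lt_of_ltJ this
          have heqi : (transEdges θ (α * γ))[xi θ α β - 1]'(by omega) =
              (transEdges θ α)[xi θ α β - 1]'hk1 := by
            rw [List.getElem_of_eq hGE, List.getElem_append_left hk1]
          rw [heqi] at hlt2
          omega
      split_ifs with h' <;> omega
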